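/- Let A be a closed semi-algebraic subset of ℝ^p × ℝ^{n−p} which is allowable. Then there is a succession of permissible blow-ups μ: R̃^n → ℝ^n such that μ^{-1}(A) is almost strictly allowable in R̃^n. -/

import Mathlib

/-!
Common definitions: semi-algebraic sets and maps, dimension via the Zariski closure,
Nash submanifolds and Nash maps, generically defined differential forms and their
(absolute and oriented) integrals, faces and (strict) allowability, permissible blow-ups
(encoded combinatorially through their fans of monomial charts), logarithmic forms, and
the complex (admissible) setting.
-/

open MeasureTheory Set
open scoped ENNReal NNReal Topology

noncomputable section

/-- `ℝ^ι` as a Euclidean space. -/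
abbrev Euc (ι : Type) [Fintype ι] : Type := EuclideanSpace ℝ ι

namespace SA

variable {ι κ : Type} [Fintype ι] [Fintype κ]

/-- A subset of `ℝ^ι` is semi-algebraic if it is a finite union of basic sets,
each defined by finitely many polynomial equations and strict inequalities. -/
def IsSemialgebraic (S : Set (Euc ι)) : Prop :=
  ∃ (N : ℕ) (P Q : Fin N → Finset (MvPolynomial ι ℝ)),
    S = ⋃ a : Fin N, {x | (∀ f ∈ P a, MvPolynomial.eval (fun i => x i) f = 0) ∧
      ∀ g ∈ Q a, 0 < MvPolynomial.eval (fun i => x i) g}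

/-- The ideal of polynomials vanishing on a subset of `ℝ^ι`. -/
def vanishingIdeal (S : Set (Euc ι)) : Ideal (MvPolynomial ι ℝ) where
  carrier := {f | ∀ x ∈ S, MvPolynomial.eval (fun i => x i) f = 0}
  zero_mem' := by intro x _; simp
  add_mem' := by intro a b ha hb x hx; simp [ha x hx, hb x hx]
  smul_mem' := by intro c a ha x hx; simp [ha x hx]

/-- The (real) Zariski closure of a subset of `ℝ^ι`. -/
def zariskiClosure (S : Set (Euc ι)) : Set (Euc ι) :=
  {x | ∀ f ∈ vanishingIdeal S, MvPolynomial.eval (fun i => x i) f = 0}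

/-- The dimension of a semi-algebraic set: the Krull dimension of the coordinate ring
of its Zariski closure. -/
def dim (S : Set (Euc ι)) : WithBot ℕ∞ :=
  ringKrullDim (MvPolynomial ι ℝ ⧸ vanishingIdeal S)

/-- Projection of `ℝ^(ι ⊕ κ)` onto the first group of coordinates. -/
def projL (z : Euc (ι ⊕ κ)) : Euc ι := WithLp.toLp 2 fun i => z (Sum.inl i)

/-- Projection of `ℝ^(ι ⊕ κ)` onto the second group of coordinates. -/
def projR (z : Euc (ι ⊕ κ)) : Euc κ := WithLp.toLp 2 fun j => z (Sum.inr j)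

/-- A map defined on a semi-algebraic set is semi-algebraic if its graph is. -/
def IsSemialgebraicOn (S : Set (Euc ι)) (f : Euc ι → Euc κ) : Prop :=
  IsSemialgebraic {z : Euc (ι ⊕ κ) | projL z ∈ S ∧ projR z = f (projL z)}

/-- A real-valued function on a semi-algebraic set is semi-algebraic if its graph is. -/
def IsSemialgebraicFunOn (S : Set (Euc ι)) (f : Euc ι → ℝ) : Prop :=
  IsSemialgebraic {z : Euc (ι ⊕ Fin 1) | projL z ∈ S ∧ z (Sum.inr 0) = f (projL z)}

/-- `M` is a `d`-dimensional smooth submanifold of `ℝ^ι`: near each of its points it can be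
straightened, by a diffeomorphism between open sets, onto a `d`-dimensional coordinate
subspace. -/
def IsSmoothSubmanifold (d : ℕ) (M : Set (Euc ι)) : Prop :=
  ∀ x ∈ M, ∃ (U V : Set (Euc ι)) (φ ψ : Euc ι → Euc ι) (J : Finset ι),
    IsOpen U ∧ x ∈ U ∧ IsOpen V ∧
    ContDiffOn ℝ ((⊤ : ℕ∞) : WithTop ℕ∞) φ U ∧ ContDiffOn ℝ ((⊤ : ℕ∞) : WithTop ℕ∞) ψ V ∧
    Set.MapsTo φ U V ∧ (∀ y ∈ U, ψ (φ y) = y) ∧ (∀ y ∈ V, φ (ψ y) = y) ∧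
    J.card = d ∧ φ '' (U ∩ M) = V ∩ {y | ∀ i ∉ J, y i = 0}

/-- A Nash submanifold of `ℝ^ι` of dimension `d`: a semi-algebraic subset which is a
`d`-dimensional smooth submanifold (such a set is automatically Nash). -/
def IsNashSubmanifold (d : ℕ) (M : Set (Euc ι)) : Prop :=
  IsSemialgebraic M ∧ IsSmoothSubmanifold d M

/-- A map is smooth on a subset `S` if near each point of `S` it admits a smooth local
extension. -/
def SmoothOnSet (S : Set (Euc ι)) (f : Euc ι → Euc κ) : Prop :=
  ∀ x ∈ S, ∃ (U : Set (Euc ι)) (g : Euc ι → Euc κ), IsOpen U ∧ x ∈ U ∧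
    ContDiffOn ℝ ((⊤ : ℕ∞) : WithTop ℕ∞) g U ∧ Set.EqOn f g (S ∩ U)

/-- A Nash map on `S`: semi-algebraic and smooth on `S`. -/
def IsNashMapOn (S : Set (Euc ι)) (f : Euc ι → Euc κ) : Prop :=
  IsSemialgebraicOn S f ∧ SmoothOnSet S f

/-- A Nash (real-valued) function on `S`: semi-algebraic and smooth on `S`. -/
def IsNashFunOn (S : Set (Euc ι)) (f : Euc ι → ℝ) : Prop :=
  IsSemialgebraicFunOn S f ∧
  ∀ x ∈ S, ∃ (U : Set (Euc ι)) (g : Euc ι → ℝ), IsOpen U ∧ x ∈ U ∧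
    ContDiffOn ℝ ((⊤ : ℕ∞) : WithTop ℕ∞) g U ∧ Set.EqOn f g (S ∩ U)

/-- A Nash diffeomorphism from `U` onto `U'`: a bijective Nash map with Nash inverse. -/
def IsNashDiffeoOn (U : Set (Euc ι)) (U' : Set (Euc κ)) (f : Euc ι → Euc κ) : Prop :=
  IsNashMapOn U f ∧ Set.BijOn f U U' ∧
    ∃ g : Euc κ → Euc ι, IsNashMapOn U' g ∧ Set.InvOn g f U U'

/-- A smooth `m`-form on `Ω ⊆ ℝ^ι`, encoded as a function of a point and an `m`-tuple of
vectors: at each point of `Ω` it is an alternating multilinear form, and for each fixed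
tuple of vectors it depends smoothly on the point. -/
def IsSmoothForm (m : ℕ) (Ω : Set (Euc ι)) (ψ : Euc ι → (Fin m → Euc ι) → ℝ) : Prop :=
  (∀ x ∈ Ω, ∃ A : AlternatingMap ℝ (Euc ι) ℝ (Fin m), ψ x = ⇑A) ∧
  ∀ v : Fin m → Euc ι, ContDiffOn ℝ ((⊤ : ℕ∞) : WithTop ℕ∞) (fun x => ψ x v) Ω

/-- Pull-back of an `m`-form `ψ` along a map `h`, differentiated within the set `U`. -/
def pullback {m : ℕ} (h : Euc ι → Euc κ) (U : Set (Euc ι))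
    (ψ : Euc κ → (Fin m → Euc κ) → ℝ) : Euc ι → (Fin m → Euc ι) → ℝ :=
  fun x v => ψ (h x) fun j => fderivWithin ℝ h U x (v j)

/-- The orthonormal `m`-frames tangent to `U` at `x`. -/
def tangentFrames (m : ℕ) (U : Set (Euc ι)) (x : Euc ι) : Set (Fin m → Euc ι) :=
  {v | Orthonormal ℝ v ∧ ∀ j, v j ∈ tangentConeAt ℝ U x}

/-- The integral `∫_U |φ|` of the density of an `m`-form `φ` over `U`: the integral, with
respect to the `m`-dimensional Hausdorff measure, of the norm of `φ` on tangent
orthonormal frames. -/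
def absIntegral (m : ℕ) (U : Set (Euc ι)) (φ : Euc ι → (Fin m → Euc ι) → ℝ) : ℝ≥0∞ :=
  ∫⁻ x in U, ENNReal.ofReal (⨆ v ∈ tangentFrames m U x, |φ x v|) ∂μH[(m : ℝ)]

/-- An orientation of an `m`-dimensional submanifold `U`, presented as a continuous choice
of tangent orthonormal `m`-frames. -/
def IsOrientationFrame (m : ℕ) (U : Set (Euc ι)) (o : Euc ι → Fin m → Euc ι) : Prop :=
  ContinuousOn o U ∧ ∀ x ∈ U, o x ∈ tangentFrames m U x

/-- The integral `∫_U φ` of an `m`-form `φ` over `U`, oriented by the frame `o`. -/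
def orIntegral (m : ℕ) (U : Set (Euc ι)) (o : Euc ι → Fin m → Euc ι)
    (φ : Euc ι → (Fin m → Euc ι) → ℝ) : ℝ :=
  ∫ x in U, φ x (o x) ∂μH[(m : ℝ)]

/-- The standard (positively oriented, orthonormal) frame of `ℝ^m`. -/
def stdFrame (m : ℕ) : Fin m → Euc (Fin m) := fun j => EuclideanSpace.single j 1

/-- `δ(f)`: the maximal cardinality of the finite fibres of `f` restricted to `S`
(`0` if every fibre is infinite). -/
def delta (S : Set (Euc ι)) (f : Euc ι → Euc κ) : ℕ :=
  sSup {k : ℕ | ∃ u ∈ f '' S, (S ∩ f ⁻¹' {u}).Finite ∧ (S ∩ f ⁻¹' {u}).ncard = k}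

/-- A member of `Op(S)` for a semi-algebraic set `S` of dimension `≤ m`: if `dim S = m`, a
dense open semi-algebraic subset `U ⊆ S` which is an `m`-dimensional Nash submanifold with
`dim (S ∖ U) < m`; integrals of `m`-forms over `S` are computed over such a `U`. By the
convention of the paper, if `dim S < m` the integral is set to `0`, i.e. `U = ∅`. -/
def PullbackDomain (m : ℕ) (S U : Set (Euc ι)) : Prop :=
  (dim S = ((m : ℕ∞) : WithBot ℕ∞) ∧ U ⊆ S ∧ (∃ O, IsOpen O ∧ U = S ∩ O) ∧
    IsSemialgebraic U ∧ IsNashSubmanifold m U ∧ dim (S \ U) < ((m : ℕ∞) : WithBot ℕ∞)) ∨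
  (dim S < ((m : ℕ∞) : WithBot ℕ∞) ∧ U = ∅)

/-- A domain over which the pull-back of an `m`-form along `h` is defined: a member of
`Op(S)` on which `h` is a Nash map. -/
def IntegralDomain (m : ℕ) (S U : Set (Euc ι)) (h : Euc ι → Euc κ) : Prop :=
  PullbackDomain m S U ∧ IsNashMapOn U h

/-- The face of `ℝ^(ι⊕κ)` cut out by the vanishing of the distinguished coordinates in `I`. -/
def face (κ : Type) [Fintype κ] (I : Finset ι) : Set (Euc (ι ⊕ κ)) :=
  {z | ∀ i ∈ I, z (Sum.inl i) = 0}

/-- Allowability: the intersection with every proper face has dimension strictly smaller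
than the dimension of the face. -/
def Allowable (C : Set (Euc (ι ⊕ κ))) : Prop :=
  ∀ I : Finset ι, I.Nonempty →
    dim (C ∩ face κ I) + ((I.card : ℕ∞) : WithBot ℕ∞) <
      (((Fintype.card ι + Fintype.card κ : ℕ) : ℕ∞) : WithBot ℕ∞)

/-- Strict allowability with respect to the face cut out by `I`: the Zariski closure of the
intersection contains no face. -/
def StrictlyAllowableWrt (C : Set (Euc (ι ⊕ κ))) (I : Finset ι) : Prop :=
  ∀ I' : Finset ι, ¬ (face κ I' ⊆ zariskiClosure (C ∩ face κ I))

/-- Strict allowability: strict allowability with respect to every face (including the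
ambient space itself). -/
def StrictlyAllowable (C : Set (Euc (ι ⊕ κ))) : Prop :=
  ∀ I : Finset ι, StrictlyAllowableWrt C I

/-- Almost strict allowability: strict allowability with respect to every proper face. -/
def AlmostStrictlyAllowable (C : Set (Euc (ι ⊕ κ))) : Prop :=
  ∀ I : Finset ι, I.Nonempty → StrictlyAllowableWrt C I

/-- The set of columns ("rays") of a matrix. -/
def raysOf {p : ℕ} (M : Matrix (Fin p) (Fin p) ℤ) : Finset (Fin p → ℤ) :=
  Finset.univ.image fun j i => M i j

/-- The set of columns of `M` indexed by `J`. -/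
def colSet {p : ℕ} (M : Matrix (Fin p) (Fin p) ℤ) (J : Finset (Fin p)) :
    Finset (Fin p → ℤ) :=
  J.image fun j i => M i j

/-- Star subdivision of a smooth fan (recorded through its maximal cones, each given by the
matrix of its ray generators) at the cone spanned by the rays in `R`. -/
def starSubdiv {p : ℕ} (F : Finset (Matrix (Fin p) (Fin p) ℤ)) (R : Finset (Fin p → ℤ)) :
    Finset (Matrix (Fin p) (Fin p) ℤ) :=
  F.filter (fun M => ¬ R ⊆ raysOf M) ∪
  (F.filter (fun M => R ⊆ raysOf M)).biUnion fun M =>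
    (Finset.univ.filter fun j : Fin p => (fun i => M i j) ∈ R).image fun j =>
      M.updateCol j fun i => ∑ v ∈ R, v i

/-- Successions of permissible blow-ups over a given stage, recorded combinatorially through
the fans of their monomial charts: each permissible blow-up is the star subdivision of the
fan at a face of codimension `≥ 2` (a cone spanned by at least two of the rays of a maximal
cone). -/
inductive IsBlowupTower (p : ℕ) :
    Finset (Matrix (Fin p) (Fin p) ℤ) → Finset (Matrix (Fin p) (Fin p) ℤ) → Prop
  | refl (F : Finset (Matrix (Fin p) (Fin p) ℤ)) : IsBlowupTower p F F
  | step (F₀ F : Finset (Matrix (Fin p) (Fin p) ℤ)) (h : IsBlowupTower p F₀ F)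
      (M : Matrix (Fin p) (Fin p) ℤ) (hM : M ∈ F) (J : Finset (Fin p)) (hJ : 2 ≤ J.card) :
      IsBlowupTower p F₀ (starSubdiv F (colSet M J))

/-- A succession of permissible blow-ups of the base space itself (whose fan consists of the
single standard cone, with ray matrix `1`). -/
def IsBlowupFan (p : ℕ) (F : Finset (Matrix (Fin p) (Fin p) ℤ)) : Prop :=
  IsBlowupTower p {1} F

/-- A monomial chart map `ℝ^p × ℝ^q → ℝ^p × ℝ^q` of a succession of permissible blow-ups:
the monomial map with (nonnegative) exponent matrix `M` on the first factor and the
identity on the second. -/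
def monMap (p q : ℕ) (M : Matrix (Fin p) (Fin p) ℤ) (z : Euc (Fin p ⊕ Fin q)) :
    Euc (Fin p ⊕ Fin q) :=
  WithLp.toLp 2 <| Sum.elim (fun i => ∏ j : Fin p, z (Sum.inl j) ^ (M i j).toNat) fun j => z (Sum.inr j)

/-- The monomial map with integer exponent matrix `N` (a transition map between charts). -/
def monMapZ (p q : ℕ) (N : Matrix (Fin p) (Fin p) ℤ) (z : Euc (Fin p ⊕ Fin q)) :
    Euc (Fin p ⊕ Fin q) :=
  WithLp.toLp 2 <| Sum.elim (fun i => ∏ j : Fin p, z (Sum.inl j) ^ (N i j)) fun j => z (Sum.inr j)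

/-- The locus where the monomial map with exponent matrix `N` is regular. -/
def transDomain (p q : ℕ) (N : Matrix (Fin p) (Fin p) ℤ) : Set (Euc (Fin p ⊕ Fin q)) :=
  {z | ∀ i j, N i j < 0 → z (Sum.inl j) ≠ 0}

/-- A family of subsets of the charts of the succession of blow-ups with fan `F` defines a
global subset iff it is compatible with the transition maps between charts. -/
def CompatibleFamily (p q : ℕ) (F : Finset (Matrix (Fin p) (Fin p) ℤ))
    (B : Matrix (Fin p) (Fin p) ℤ → Set (Euc (Fin p ⊕ Fin q))) : Prop :=
  ∀ M ∈ F, ∀ M' ∈ F, ∀ z ∈ transDomain p q (M'⁻¹ * M),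
    monMapZ p q (M'⁻¹ * M) z ∈ transDomain p q (M⁻¹ * M') →
    monMapZ p q (M⁻¹ * M') (monMapZ p q (M'⁻¹ * M) z) = z →
    (z ∈ B M ↔ monMapZ p q (M'⁻¹ * M) z ∈ B M')

/-- The basic logarithmic `m`-form
`(dr_{i₁}/r_{i₁}) ∧ ⋯ ∧ (dr_{i_k}/r_{i_k}) ∧ dx_{j₁} ∧ ⋯ ∧ dx_{j_{m-k}}`
(`P = {i₁ < ⋯ < i_k}`, `Q = {j₁ < ⋯ < j_{m-k}}`) evaluated at the point `z` on the
vectors `v`. -/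
def logTerm (p q : ℕ) (m : ℕ) (P : Finset (Fin p)) (Q : Finset (Fin q))
    (z : Euc (Fin p ⊕ Fin q)) (v : Fin m → Euc (Fin p ⊕ Fin q)) : ℝ :=
  Matrix.det (Matrix.of fun l k : Fin m =>
    if hl : (l : ℕ) < P.card then
      v k (Sum.inl ((P.orderIsoOfFin rfl) ⟨l, hl⟩)) /
        z (Sum.inl ((P.orderIsoOfFin rfl) ⟨l, hl⟩))
    else if hq : (l : ℕ) - P.card < Q.card then
      v k (Sum.inr ((Q.orderIsoOfFin rfl) ⟨(l : ℕ) - P.card, hq⟩))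
    else 0)

/-- An `m`-form on `ℝ^p × ℝ^q` with logarithmic singularities along the hyperplanes
`{r_i = 0}`: away from these hyperplanes it is a sum of basic logarithmic forms with
coefficients smooth on all of `ℝ^p × ℝ^q`. -/
def IsLogForm (p q : ℕ) (m : ℕ)
    (ω : Euc (Fin p ⊕ Fin q) → (Fin m → Euc (Fin p ⊕ Fin q)) → ℝ) : Prop :=
  ∃ a : Finset (Fin p) × Finset (Fin q) → Euc (Fin p ⊕ Fin q) → ℝ,
    (∀ s, ContDiff ℝ ((⊤ : ℕ∞) : WithTop ℕ∞) (a s)) ∧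
    ∀ z, (∀ i : Fin p, z (Sum.inl i) ≠ 0) → ∀ v,
      ω z v = ∑ s ∈ Finset.univ.filter
          (fun s : Finset (Fin p) × Finset (Fin q) => s.1.card + s.2.card = m),
        a s z * logTerm p q m s.1 s.2 z v

section Projections
variable {p q' : ℕ}

/-- The projection `ℝ^p × ℝ^{q'+1} → ℝ^p × ℝ^{q'}` forgetting the last coordinate `x_n`. -/
def pr1 (z : Euc (Fin p ⊕ Fin (q' + 1))) : Euc (Fin p ⊕ Fin q') :=
  WithLp.toLp 2 <| Sum.elim (fun i => z (Sum.inl i)) fun j => z (Sum.inr j.castSucc)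

/-- The projection `ℝ^p × ℝ^{q'} → ℝ^p` onto the first group of coordinates. -/
def pr2 (w : Euc (Fin p ⊕ Fin q')) : Euc (Fin p) := WithLp.toLp 2 fun i => w (Sum.inl i)

/-- Adjoining a value of the last coordinate `x_n`. -/
def combineLast (w : Euc (Fin p ⊕ Fin q')) (s : ℝ) : Euc (Fin p ⊕ Fin (q' + 1)) :=
  WithLp.toLp 2 <| Sum.elim (fun i => w (Sum.inl i)) fun j =>
    if h : (j : ℕ) < q' then w (Sum.inr ⟨j, h⟩) else s

/-- The linear change of variables `x_i ↦ x_i + c_i x_n` (`p < i < n`), `x_n ↦ x_n`. -/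
def lc (c : Fin q' → ℝ) (z : Euc (Fin p ⊕ Fin (q' + 1))) : Euc (Fin p ⊕ Fin (q' + 1)) :=
  WithLp.toLp 2 <| Sum.elim (fun i => z (Sum.inl i)) fun j =>
    if h : (j : ℕ) < q' then z (Sum.inr j) + c ⟨j, h⟩ * z (Sum.inr (Fin.last q')) else
      z (Sum.inr j)

/-- Condition (F): over the neighbourhood `V₀ = {|r_i| < ρ₀}` of the origin, the projection
forgetting `x_n`, restricted to `A ∩ {r_i = 0}`, has finite fibres (for each `i`). -/
def ConditionF (p q' : ℕ) (ρ₀ : ℝ) (A : Set (Euc (Fin p ⊕ Fin (q' + 1)))) : Prop :=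
  ∀ i : Fin p, ∀ w : Euc (Fin p ⊕ Fin q'), (∀ i' : Fin p, |w (Sum.inl i')| < ρ₀) →
    {z | z ∈ A ∧ z (Sum.inl i) = 0 ∧ pr1 z = w}.Finite

/-- `v(A|x_n; r)`: the supremum, over the points `T` of `ℝ^{n-1}` lying over `r ∈ ℝ^p`, of
the Lebesgue measure (with respect to `dx_n`) of the fibre of `A` over `T`. -/
def vfun (A : Set (Euc (Fin p ⊕ Fin (q' + 1)))) (r : Euc (Fin p)) : ℝ≥0∞ :=
  ⨆ w : {w : Euc (Fin p ⊕ Fin q') // pr2 w = r},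
    volume {s : ℝ | combineLast w.1 s ∈ A}

end Projections

/-- A Zariski open subset of `ℝ^ι`. -/
def IsZariskiOpen (W : Set (Euc ι)) : Prop :=
  ∃ T : Set (MvPolynomial ι ℝ),
    W = {x | ∃ f ∈ T, MvPolynomial.eval (fun i => x i) f ≠ 0}

/-- The set of points of `V` that are nonsingular in dimension `d`: near such a point, `V`
is cut out by `card ι − d` polynomials vanishing on `V` whose gradients at the point are
linearly independent. -/
def RegPts (d : ℕ) (V : Set (Euc ι)) : Set (Euc ι) :=
  {x | x ∈ V ∧ ∃ f : Fin (Fintype.card ι - d) → MvPolynomial ι ℝ,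
    (∀ j, f j ∈ vanishingIdeal V) ∧
    (∃ O : Set (Euc ι), IsOpen O ∧ x ∈ O ∧
      V ∩ O = {y | y ∈ O ∧ ∀ j, MvPolynomial.eval (fun i => y i) (f j) = 0}) ∧
    LinearIndependent ℝ
      (fun j => (WithLp.toLp 2 (fun i => MvPolynomial.eval (fun i' => x i')
        (MvPolynomial.pderiv i (f j))) : Euc ι))}

/-- The standard `m`-simplex `Δ^m ⊆ ℝ^m`. -/
def simplex (m : ℕ) : Set (Euc (Fin m)) := {x | (∀ i, 0 ≤ x i) ∧ ∑ i, x i ≤ 1}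

/-- The relative interior of the face of `Δ^m` given by the vanishing of the coordinates in
`J` and (if `b = true`) the equation `∑ x_i = 1`. -/
def relintFace (m : ℕ) (J : Finset (Fin m)) (b : Bool) : Set (Euc (Fin m)) :=
  {x | (∀ i ∈ J, x i = 0) ∧ (∀ i ∉ J, 0 < x i) ∧
    (if b then ∑ i, x i = 1 else ∑ i, x i < 1)}

/-- The vertices of `Δ^m`: `vert m 0 = 0` and `vert m (t+1) = e_t`. -/
def vert (m : ℕ) (t : Fin (m + 1)) : Euc (Fin m) :=
  WithLp.toLp 2 fun i => if (i : ℕ) + 1 = (t : ℕ) then 1 else 0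

/-- Barycentric coordinates of a point of `Δ^k`. -/
def bary {k : ℕ} (y : Euc (Fin k)) (l : Fin (k + 1)) : ℝ :=
  if h : (l : ℕ) = 0 then 1 - ∑ i, y i else y ⟨(l : ℕ) - 1, by have := l.isLt; omega⟩

/-- The `j`-th affine face map `Δ^k → Δ^{k+1}` (omitting the `j`-th vertex). -/
def faceMap (k : ℕ) (j : Fin (k + 2)) (y : Euc (Fin k)) : Euc (Fin (k + 1)) :=
  WithLp.toLp 2 fun i => ∑ l : Fin (k + 1), bary y l * vert (k + 1) (j.succAbove l) i

/-- The exterior derivative of a `k`-form (with smooth coefficients). -/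
def extDeriv (k : ℕ) (ψ : Euc ι → (Fin k → Euc ι) → ℝ) :
    Euc ι → (Fin (k + 1) → Euc ι) → ℝ :=
  fun x v => ∑ j : Fin (k + 1), (-1 : ℝ) ^ (j : ℕ) *
    fderiv ℝ (fun y => ψ y fun i => v (j.succAbove i)) x (v j)

/-- Adjoining a parameter value as an extra coordinate. -/
def pair {m : ℕ} (x : Euc (Fin m)) (t : ℝ) : Euc (Fin m ⊕ Fin 1) :=
  WithLp.toLp 2 <| Sum.elim (fun i => x i) fun _ => t

/-- `ℂ^n` identified with `ℝ^n × ℝ^n`: the `k`-th complex coordinate of the real point. -/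
def cxVec (n : ℕ) (w : Euc (Fin n ⊕ Fin n)) (k : Fin n) : ℂ :=
  Complex.ofReal (w (Sum.inl k)) + Complex.I * Complex.ofReal (w (Sum.inr k))

/-- The face `ℍ_I = {z_i = 0, i ∈ I}` of `ℂ^n`. -/
def cxFace (n : ℕ) (I : Finset (Fin n)) : Set (Euc (Fin n ⊕ Fin n)) :=
  {w | ∀ i ∈ I, cxVec n w i = 0}

/-- The divisor `D = ⋃ {z_k = 1}` of `ℂ^n`. -/
def cxD (n : ℕ) : Set (Euc (Fin n ⊕ Fin n)) :=
  {w | ∃ k : Fin n, cxVec n w k = 1}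

/-- `m`-admissibility of a closed semi-algebraic subset of `ℂ^n`:
`dim (A ∩ ℍ_I ∩ (ℂ^n − D)) ≤ m − 2|I|` for every `I`. -/
def mAdmissible (n m : ℕ) (A : Set (Euc (Fin n ⊕ Fin n))) : Prop :=
  ∀ I : Finset (Fin n),
    dim (A ∩ cxFace n I ∩ (cxD n)ᶜ) + (((2 * I.card : ℕ) : ℕ∞) : WithBot ℕ∞) ≤
      ((m : ℕ∞) : WithBot ℕ∞)

/-- The polar-coordinate parametrisation of the sector `i^α · ℂ₊`:
`(r, τ) ↦ i^α · (r/√(τ²+1)) · (1 + iτ)`. -/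
def polarC (α : ℕ) (r τ : ℝ) : ℂ :=
  Complex.I ^ α *
    (Complex.ofReal (r / Real.sqrt (τ ^ 2 + 1)) +
      Complex.I * Complex.ofReal (r * τ / Real.sqrt (τ ^ 2 + 1)))

/-- The product polar-coordinate map `π : C̃₊ⁿ → ℂⁿ` (in real coordinates), the `k`-th
factor landing in the sector of index `α k`. -/
def polarMap (n : ℕ) (α : Fin n → ℕ) (w : Euc (Fin n ⊕ Fin n)) : Euc (Fin n ⊕ Fin n) :=
  WithLp.toLp 2 <| Sum.elim (fun k => (polarC (α k) (w (Sum.inl k)) (w (Sum.inr k))).re)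
    fun k => (polarC (α k) (w (Sum.inl k)) (w (Sum.inr k))).im

/-- `C̃₊ⁿ = (ℝ_{≥0} × [−1,1])ⁿ`. -/
def tildeDomain (n : ℕ) : Set (Euc (Fin n ⊕ Fin n)) :=
  {w | ∀ k : Fin n, 0 ≤ w (Sum.inl k) ∧ |w (Sum.inr k)| ≤ 1}

/-- The map `q = q_{P,Q,R}` recording the coordinates `r_i (i ∈ P)`, `τ_j (j ∈ Q)` and
`(r_k, τ_k) (k ∈ R)`. -/
def qMap (n : ℕ) (P Q R : Finset (Fin n)) (w : Euc (Fin n ⊕ Fin n)) :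
    Euc (↥P ⊕ (↥Q ⊕ (↥R ⊕ ↥R))) :=
  WithLp.toLp 2 <| Sum.elim (fun i => w (Sum.inl i.1))
    (Sum.elim (fun j => w (Sum.inr j.1))
      (Sum.elim (fun k => w (Sum.inl k.1)) fun k => w (Sum.inr k.1)))

/-- The basic complex logarithmic form `(dz₁/z₁ ∧ ⋯ ∧ dz_n/z_n) ∧ ⋀_{k∈R} dz̄_k`
evaluated at `z` on the (real) tangent vectors `v`. -/
def cxLogTerm (n m : ℕ) (R : Finset (Fin n)) (z : Euc (Fin n ⊕ Fin n))
    (v : Fin m → Euc (Fin n ⊕ Fin n)) : ℂ :=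
  Matrix.det (Matrix.of fun l k : Fin m =>
    if hl : (l : ℕ) < n then
      cxVec n (v k) ⟨l, hl⟩ / cxVec n z ⟨l, hl⟩
    else if hr : (l : ℕ) - n < R.card then
      starRingEnd ℂ (cxVec n (v k) ((R.orderIsoOfFin rfl) ⟨(l : ℕ) - n, hr⟩))
    else 0)

/-- An `(n, m−n)`-form on `ℂ^n` with logarithmic singularities along the coordinate
hyperplanes: a linear combination, with coefficients smooth functions on `ℂ^n`, of the
forms `(dz₁/z₁ ∧ ⋯ ∧ dz_n/z_n) ∧ ⋀_{k∈R} dz̄_k` with `|R| = m − n`. -/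
def IsCxLogForm (n m : ℕ)
    (ω : Euc (Fin n ⊕ Fin n) → (Fin m → Euc (Fin n ⊕ Fin n)) → ℂ) : Prop :=
  ∃ a : Finset (Fin n) → Euc (Fin n ⊕ Fin n) → ℂ,
    (∀ R, ContDiff ℝ ((⊤ : ℕ∞) : WithTop ℕ∞) (a R)) ∧
    ∀ z, (∀ k : Fin n, cxVec n z k ≠ 0) → ∀ v,
      ω z v = ∑ R ∈ Finset.univ.filter (fun R : Finset (Fin n) => R.card = m - n),
        a R z * cxLogTerm n m R z v

/-- The integral of the density `|φ|` of a complex-valued `m`-form over `U`. -/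
def absIntegralC (m : ℕ) (U : Set (Euc ι)) (φ : Euc ι → (Fin m → Euc ι) → ℂ) : ℝ≥0∞ :=
  ∫⁻ x in U, ENNReal.ofReal (⨆ v ∈ tangentFrames m U x, ‖φ x v‖) ∂μH[(m : ℝ)]

/-- The substitution homomorphism of the chart with exponent matrix `M`:
`x_i ↦ ∏_j x_j^{M i j}` on the first `p` variables. -/
def chartHom (k : Type) [CommSemiring k] (p q : ℕ) (M : Matrix (Fin p) (Fin p) ℤ) :
    MvPolynomial (Fin p ⊕ Fin q) k →ₐ[k] MvPolynomial (Fin p ⊕ Fin q) k :=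
  MvPolynomial.aeval (Sum.elim
    (fun i => ∏ j : Fin p,
      (MvPolynomial.X (Sum.inl j) : MvPolynomial (Fin p ⊕ Fin q) k) ^ (M i j).toNat)
    fun j => MvPolynomial.X (Sum.inr j))

/-- The product of the first `p` variables. -/
def torusMon (k : Type) [CommSemiring k] (p q : ℕ) : MvPolynomial (Fin p ⊕ Fin q) k :=
  ∏ i : Fin p, MvPolynomial.X (Sum.inl i)

/-- The ideal of the strict transform, in the chart with exponent matrix `M`, of the
subvariety cut out by `P`: the saturation, with respect to the exceptional coordinates, of
the image of `P` under the chart substitution. -/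
def strictIdeal (k : Type) [CommRing k] (p q : ℕ) (M : Matrix (Fin p) (Fin p) ℤ)
    (P : Ideal (MvPolynomial (Fin p ⊕ Fin q) k)) :
    Ideal (MvPolynomial (Fin p ⊕ Fin q) k) where
  carrier := {f | ∃ N : ℕ, torusMon k p q ^ N * f ∈ Ideal.map (chartHom k p q M) P}
  zero_mem' := ⟨0, by simp⟩
  add_mem' := by
    rintro a b ⟨Na, ha⟩ ⟨Nb, hb⟩
    refine ⟨Na + Nb, ?_⟩
    have h1 : torusMon k p q ^ (Na + Nb) * (a + b)
        = torusMon k p q ^ Nb * (torusMon k p q ^ Na * a)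
          + torusMon k p q ^ Na * (torusMon k p q ^ Nb * b) := by ring
    rw [h1]
    exact Ideal.add_mem _ (Ideal.mul_mem_left _ _ ha) (Ideal.mul_mem_left _ _ hb)
  smul_mem' := by
    rintro c a ⟨N, ha⟩
    refine ⟨N, ?_⟩
    have h1 : torusMon k p q ^ N * (c • a) = c * (torusMon k p q ^ N * a) := by
      rw [smul_eq_mul]; ring
    rw [h1]
    exact Ideal.mul_mem_left _ _ ha

/-- The ideal of the face `{x_i = 0, i ∈ I}`. -/
def faceIdeal (k : Type) [CommSemiring k] (p q : ℕ) (I : Finset (Fin p)) :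
    Ideal (MvPolynomial (Fin p ⊕ Fin q) k) :=
  Ideal.span ((fun i => (MvPolynomial.X (Sum.inl i) : MvPolynomial (Fin p ⊕ Fin q) k)) '' I)

end SA

namespace S11


open MvPolynomial

abbrev Vars (p q : ℕ) := Fin p ⊕ Fin q
abbrev Poly (p q : ℕ) : Type := MvPolynomial (Vars p q) ℝ

variable {p q : ℕ}

lemma aeval_eq_eval (x : Vars p q → ℝ) (f : Poly p q) : aeval x f = eval x f := by
  rw [← coe_aeval_eq_eval]; rfl

lemma eval_aeval (x : Vars p q → ℝ) (σ : Vars p q → Poly p q) (f : Poly p q) :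
    eval x (aeval σ f) = eval (fun s => eval x (σ s)) f := by
  induction f using MvPolynomial.induction_on with
  | C a => simp [MvPolynomial.algebraMap_eq]
  | add f g hf hg => simp only [map_add, hf, hg]
  | mul_X f s hf => rw [map_mul, aeval_X, map_mul, hf, map_mul, eval_X]

lemma exists_eval_ne_zero {f : Poly p q} (hf : f ≠ 0) : ∃ x : Vars p q → ℝ, eval x f ≠ 0 := by
  by_contra h
  push_neg at h
  exact hf (MvPolynomial.funext (p := f) (q := 0) (by simpa using h))

/-- kill the variables in `T`. -/
def ψ (p q : ℕ) (T : Finset (Vars p q)) : Poly p q →ₐ[ℝ] Poly p q :=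
  aeval (fun s => if s ∈ T then 0 else X s)

lemma ψ_monomial_kill (T : Finset (Vars p q)) (d : Vars p q →₀ ℕ) (c : ℝ)
    (hs : ∃ s ∈ T, d s ≠ 0) : ψ p q T (monomial d c) = 0 := by
  obtain ⟨s, hsT, hds⟩ := hs
  rw [ψ, aeval_monomial]
  have h0 : (d.prod fun i k => (if i ∈ T then 0 else X i : Poly p q) ^ k) = 0 := by
    rw [Finsupp.prod]
    apply Finset.prod_eq_zero (Finsupp.mem_support_iff.mpr hds)
    simp [hsT, zero_pow hds]
  rw [h0, mul_zero]

lemma ψ_monomial_keep (T : Finset (Vars p q)) (d : Vars p q →₀ ℕ) (c : ℝ)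
    (h : ∀ s ∈ T, d s = 0) : ψ p q T (monomial d c) = monomial d c := by
  rw [ψ, aeval_monomial]
  have h2 : (d.prod fun i k => (if i ∈ T then 0 else X i : Poly p q) ^ k)
      = d.prod fun i k => (X i : Poly p q) ^ k := by
    apply Finsupp.prod_congr
    intro s hs
    have hsT : s ∉ T := fun hT => (Finsupp.mem_support_iff.mp hs) (h s hT)
    rw [if_neg hsT]
  rw [h2, monomial_eq, MvPolynomial.algebraMap_eq]

lemma ψ_comp {T T' : Finset (Vars p q)} (hTT : T ⊆ T') (f : Poly p q) :
    ψ p q T' (ψ p q T f) = ψ p q T' f := by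
  have h : (ψ p q T').comp (ψ p q T) = ψ p q T' := by
    apply MvPolynomial.algHom_ext
    intro s
    simp only [AlgHom.coe_comp, Function.comp_apply, ψ, aeval_X]
    by_cases hsT : s ∈ T
    · simp [hsT, hTT hsT]
    · simp [hsT]
  exact DFunLike.congr_fun h f

lemma ψ_mono {T T' : Finset (Vars p q)} (hTT : T ⊆ T') :
    RingHom.ker (ψ p q T) ≤ RingHom.ker (ψ p q T') := by
  intro f hf
  rw [RingHom.mem_ker] at hf ⊢
  rw [← ψ_comp hTT, hf, map_zero]

lemma ψ_ker_prime (T : Finset (Vars p q)) : (RingHom.ker (ψ p q T)).IsPrime :=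
  RingHom.ker_isPrime _

lemma X_mem_ker_ψ {T : Finset (Vars p q)} {s : Vars p q} (h : s ∈ T) :
    X s ∈ RingHom.ker (ψ p q T) := by
  rw [RingHom.mem_ker, ψ, aeval_X, if_pos h]

lemma X_not_mem_ker_ψ {T : Finset (Vars p q)} {s : Vars p q} (h : s ∉ T) :
    X s ∉ RingHom.ker (ψ p q T) := by
  rw [RingHom.mem_ker, ψ, aeval_X, if_neg h]
  exact X_ne_zero s


lemma quot_prime {R : Type*} [CommRing R] (I P : Ideal R) (hP : P.IsPrime) (hIP : I ≤ P) :
    (P.map (Ideal.Quotient.mk I)).IsPrime := by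
  haveI := hP
  apply Ideal.map_isPrime_of_surjective Ideal.Quotient.mk_surjective
  rwa [Ideal.mk_ker]

lemma quot_comap {R : Type*} [CommRing R] (I P : Ideal R) (hIP : I ≤ P) :
    (P.map (Ideal.Quotient.mk I)).comap (Ideal.Quotient.mk I) = P := by
  rw [Ideal.comap_map_of_surjective _ Ideal.Quotient.mk_surjective]
  rw [← RingHom.ker_eq_comap_bot, Ideal.mk_ker]
  exact sup_eq_left.mpr hIP

lemma chain_exists (p q : ℕ) (I : Ideal (Poly p q)) :
    ∀ (m : ℕ) (T : Finset (Vars p q)), (Finset.univ \ T).card = m →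
    ∀ (hI : I ≤ RingHom.ker (ψ p q T)),
    ∃ c : LTSeries (PrimeSpectrum (Poly p q ⧸ I)), c.length = m ∧
      c.head = ⟨(RingHom.ker (ψ p q T)).map (Ideal.Quotient.mk I),
        quot_prime _ _ (ψ_ker_prime T) hI⟩ := by
  intro m
  induction m with
  | zero =>
    intro T hT hI
    refine ⟨RelSeries.singleton _ ⟨_, quot_prime _ _ (ψ_ker_prime T) hI⟩, rfl, ?_⟩
    simp
  | succ m ih =>
    intro T hT hI
    have hne : (Finset.univ \ T).Nonempty := by
      rw [← Finset.card_pos, hT]; omega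
    obtain ⟨s, hs⟩ := hne
    have hsT : s ∉ T := (Finset.mem_sdiff.mp hs).2
    have hT' : (Finset.univ \ insert s T).card = m := by
      rw [Finset.sdiff_insert, Finset.card_erase_of_mem hs, hT]
      omega
    have hI' : I ≤ RingHom.ker (ψ p q (insert s T)) :=
      le_trans hI (ψ_mono (Finset.subset_insert s T))
    obtain ⟨c, hlen, hhead⟩ := ih (insert s T) hT' hI'
    have hlt : (⟨(RingHom.ker (ψ p q T)).map (Ideal.Quotient.mk I),
        quot_prime _ _ (ψ_ker_prime T) hI⟩ : PrimeSpectrum (Poly p q ⧸ I)) < c.head := by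
      rw [hhead]
      rw [← PrimeSpectrum.asIdeal_lt_asIdeal]
      refine lt_of_le_of_ne (Ideal.map_mono (ψ_mono (Finset.subset_insert s T))) ?_
      intro heq
      have h2 := congrArg (Ideal.comap (Ideal.Quotient.mk I)) heq
      rw [quot_comap _ _ hI, quot_comap _ _ hI'] at h2
      have h3 : X s ∈ RingHom.ker (ψ p q T) := by
        rw [h2]; exact X_mem_ker_ψ (Finset.mem_insert_self s T)
      exact X_not_mem_ker_ψ hsT h3
    refine ⟨c.cons _ hlt, ?_, ?_⟩
    · simp [RelSeries.cons, RelSeries.append, hlen]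
    · simp


lemma dim_lower_bound (p q : ℕ) (S : Set (Euc (Fin p ⊕ Fin q))) (T : Finset (Vars p q))
    (hsub : SA.vanishingIdeal S ≤ RingHom.ker (ψ p q T)) :
    (((Finset.univ \ T).card : ℕ∞) : WithBot ℕ∞) ≤ SA.dim S := by
  obtain ⟨c, hlen, -⟩ := chain_exists p q (SA.vanishingIdeal S) _ T rfl hsub
  have h := Order.LTSeries.length_le_krullDim c
  rw [hlen] at h
  have hdim : SA.dim S = Order.krullDim
      (PrimeSpectrum (Poly p q ⧸ SA.vanishingIdeal S)) := rfl
  rw [hdim]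
  exact_mod_cast h

lemma mem_vanishingIdeal {ι : Type} [Fintype ι] (S : Set (Euc ι)) (f : MvPolynomial ι ℝ) :
    f ∈ SA.vanishingIdeal S ↔ ∀ x ∈ S, MvPolynomial.eval (fun i => x i) f = 0 := Iff.rfl

lemma exists_poly_witness (p q : ℕ) (A : Set (Euc (Fin p ⊕ Fin q))) (hallow : SA.Allowable A)
    (K : Finset (Fin p)) (hK : K.Nonempty) :
    ∃ g : Poly p q, (∀ z ∈ A ∩ SA.face (Fin q) K, MvPolynomial.eval (fun s => z s) g = 0) ∧
      ∃ d ∈ g.support, ∀ i ∈ K, d (Sum.inl i) = 0 := by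
  by_contra hcon
  push_neg at hcon
  set S := A ∩ SA.face (Fin q) K with hS
  set T0 : Finset (Vars p q) := K.image Sum.inl with hT0
  have hsub : SA.vanishingIdeal S ≤ RingHom.ker (ψ p q T0) := by
    intro f hf
    have hfvan : ∀ z ∈ S, MvPolynomial.eval (fun s => z s) f = 0 :=
      (mem_vanishingIdeal S f).mp hf
    have hall : ∀ d ∈ f.support, ∃ i ∈ K, d (Sum.inl i) ≠ 0 := hcon f hfvan
    rw [RingHom.mem_ker]
    conv_lhs => rw [f.as_sum]
    rw [map_sum]
    apply Finset.sum_eq_zero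
    intro d hd
    obtain ⟨i, hiK, hdi⟩ := hall d hd
    exact ψ_monomial_kill _ _ _ ⟨Sum.inl i, Finset.mem_image_of_mem _ hiK, hdi⟩
  have hcard : (Finset.univ \ T0).card = p + q - K.card := by
    rw [Finset.card_sdiff_of_subset (Finset.subset_univ _)]
    rw [Finset.card_image_of_injective _ Sum.inl_injective]
    simp
  have hlb := dim_lower_bound p q S T0 hsub
  rw [hcard] at hlb
  have hup := hallow K hK
  simp only [Fintype.card_fin] at hup
  have hKp : K.card ≤ p := by
    simpa using Finset.card_le_card (Finset.subset_univ K)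
  have h1 : (((p + q - K.card : ℕ) : ℕ∞) : WithBot ℕ∞) + ((K.card : ℕ∞) : WithBot ℕ∞)
      ≤ SA.dim S + ((K.card : ℕ∞) : WithBot ℕ∞) := add_le_add_left hlb _
  have h2 : (((p + q - K.card : ℕ) : ℕ∞) : WithBot ℕ∞) + ((K.card : ℕ∞) : WithBot ℕ∞)
      = (((p + q : ℕ) : ℕ∞) : WithBot ℕ∞) := by
    rw [← WithBot.coe_add]
    norm_cast
    omega
  rw [h2] at h1
  exact absurd (lt_of_le_of_lt h1 hup) (lt_irrefl _)

section Fan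
variable {p : ℕ}

abbrev Mat (p : ℕ) := Matrix (Fin p) (Fin p) ℤ

def col (M : Mat p) (j : Fin p) : Fin p → ℤ := fun i => M i j

def pd (δ c : Fin p → ℤ) : ℤ := ∑ i, δ i * c i

def signOK (δ : Fin p → ℤ) (M : Mat p) : Prop :=
  (∀ j, 0 ≤ pd δ (col M j)) ∨ (∀ j, pd δ (col M j) ≤ 0)

def Nice (M : Mat p) : Prop := (∀ i j, 0 ≤ M i j) ∧ M.det = 1

def ΨP (δ : Fin p → ℤ) (x : (Fin p → ℤ) × (Fin p → ℤ)) : ℕ :=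
  (pd δ x.1).natAbs + (pd δ x.2).natAbs

lemma mem_raysOf {M : Mat p} {v : Fin p → ℤ} : v ∈ SA.raysOf M ↔ ∃ j, col M j = v := by
  simp only [SA.raysOf, Finset.mem_image, Finset.mem_univ, true_and]
  rfl

lemma mem_starSubdiv {F : Finset (Mat p)} {R : Finset (Fin p → ℤ)} {M' : Mat p} :
    M' ∈ SA.starSubdiv F R ↔ (M' ∈ F ∧ ¬ R ⊆ SA.raysOf M') ∨
      ∃ M ∈ F, R ⊆ SA.raysOf M ∧ ∃ j : Fin p, col M j ∈ R ∧
        M' = M.updateCol j (fun i => ∑ v ∈ R, v i) := by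
  simp only [SA.starSubdiv, Finset.mem_union, Finset.mem_filter, Finset.mem_biUnion,
    Finset.mem_image, Finset.mem_filter, Finset.mem_univ, true_and, col]
  constructor
  · rintro (⟨h1, h2⟩ | ⟨M, ⟨hM, hR⟩, j, hj, rfl⟩)
    · exact Or.inl ⟨h1, h2⟩
    · exact Or.inr ⟨M, hM, hR, j, hj, rfl⟩
  · rintro (⟨h1, h2⟩ | ⟨M, hM, hR, j, hj, rfl⟩)
    · exact Or.inl ⟨h1, h2⟩
    · exact Or.inr ⟨M, ⟨hM, hR⟩, j, hj, rfl⟩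

lemma det_updateCol_finset_sum (M : Mat p) (j : Fin p) (s : Finset (Fin p → ℤ)) :
    (M.updateCol j (fun i => ∑ v ∈ s, v i)).det = ∑ v ∈ s, (M.updateCol j v).det := by
  classical
  induction s using Finset.induction_on with
  | empty =>
    rw [Finset.sum_empty]
    have h0 : (fun i => ∑ v ∈ (∅ : Finset (Fin p → ℤ)), v i) = fun _ => (0 : ℤ) := by simp
    rw [h0]
    exact Matrix.det_eq_zero_of_column_eq_zero j (fun i => by simp [Matrix.updateCol_apply])
  | @insert u s hu ih =>
    have h0 : (fun i => ∑ v ∈ insert u s, v i) = u + fun i => ∑ v ∈ s, v i := by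
      funext i; simp [Finset.sum_insert hu]
    rw [h0, Matrix.det_updateCol_add, Finset.sum_insert hu, ih]

lemma det_child {M : Mat p} (hdet : M.det = 1) {R : Finset (Fin p → ℤ)}
    (hR : R ⊆ SA.raysOf M) {j : Fin p} (hj : col M j ∈ R) :
    (M.updateCol j (fun i => ∑ v ∈ R, v i)).det = 1 := by
  rw [det_updateCol_finset_sum]
  rw [Finset.sum_eq_single (col M j)]
  · rw [show M.updateCol j (col M j) = M from Matrix.updateCol_eq_self M j, hdet]
  · intro v hvR hvne
    obtain ⟨k, hk⟩ := mem_raysOf.mp (hR hvR)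
    have hkj : k ≠ j := by
      rintro rfl
      exact hvne hk.symm
    rw [← hk]
    exact Matrix.det_updateCol_eq_zero hkj
  · intro h; exact absurd hj h

lemma col_updateCol (M : Mat p) (j : Fin p) (c : Fin p → ℤ) (j' : Fin p) :
    col (M.updateCol j c) j' = if j' = j then c else col M j' := by
  funext i
  simp only [col, Matrix.updateCol_apply]
  split <;> rfl

lemma pd_sum (δ : Fin p → ℤ) (R : Finset (Fin p → ℤ)) :
    pd δ (fun i => ∑ v ∈ R, v i) = ∑ v ∈ R, pd δ v := by
  simp only [pd, Finset.mul_sum]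
  exact Finset.sum_comm

lemma Nice_child {M : Mat p} (h : Nice M) {R : Finset (Fin p → ℤ)}
    (hR : R ⊆ SA.raysOf M) {j : Fin p} (hj : col M j ∈ R) :
    Nice (M.updateCol j (fun i => ∑ v ∈ R, v i)) := by
  refine ⟨?_, det_child h.2 hR hj⟩
  intro i j'
  rw [Matrix.updateCol_apply]
  split
  · refine Finset.sum_nonneg fun v hv => ?_
    obtain ⟨k, hk⟩ := mem_raysOf.mp (hR hv)
    rw [← hk]
    exact h.1 i k
  · exact h.1 i j'

lemma signOK_child {δ : Fin p → ℤ} {M : Mat p} (h : signOK δ M) {R : Finset (Fin p → ℤ)}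
    (hR : R ⊆ SA.raysOf M) {j : Fin p} :
    signOK δ (M.updateCol j (fun i => ∑ v ∈ R, v i)) := by
  rcases h with h | h
  · left
    intro j'
    rw [col_updateCol]
    split
    · rw [pd_sum]
      refine Finset.sum_nonneg fun v hv => ?_
      obtain ⟨k, hk⟩ := mem_raysOf.mp (hR hv)
      rw [← hk]; exact h k
    · exact h j'
  · right
    intro j'
    rw [col_updateCol]
    split
    · rw [pd_sum]
      refine Finset.sum_nonpos fun v hv => ?_
      obtain ⟨k, hk⟩ := mem_raysOf.mp (hR hv)
      rw [← hk]; exact h k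
    · exact h j'

def badPairs (δ : Fin p → ℤ) (F : Finset (Mat p)) : Finset ((Fin p → ℤ) × (Fin p → ℤ)) :=
  F.biUnion fun M => (Finset.univ.filter fun jk : Fin p × Fin p =>
    0 < pd δ (col M jk.1) ∧ pd δ (col M jk.2) < 0).image fun jk => (col M jk.1, col M jk.2)

lemma mem_badPairs {δ : Fin p → ℤ} {F : Finset (Mat p)} {x : (Fin p → ℤ) × (Fin p → ℤ)} :
    x ∈ badPairs δ F ↔ ∃ M ∈ F, ∃ j k : Fin p,
      0 < pd δ (col M j) ∧ pd δ (col M k) < 0 ∧ x = (col M j, col M k) := by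
  simp only [badPairs, Finset.mem_biUnion, Finset.mem_image, Finset.mem_filter,
    Finset.mem_univ, true_and]
  constructor
  · rintro ⟨M, hM, ⟨j, k⟩, ⟨h1, h2⟩, rfl⟩
    exact ⟨M, hM, j, k, h1, h2, rfl⟩
  · rintro ⟨M, hM, j, k, h1, h2, rfl⟩
    exact ⟨M, hM, ⟨j, k⟩, ⟨h1, h2⟩, rfl⟩

lemma badPairs_empty_signOK {δ : Fin p → ℤ} {F : Finset (Mat p)}
    (h : badPairs δ F = ∅) : ∀ M ∈ F, signOK δ M := by
  intro M hM
  by_contra hbad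
  rw [signOK, not_or] at hbad
  obtain ⟨h1, h2⟩ := hbad
  push_neg at h1 h2
  obtain ⟨k, hk⟩ := h1
  obtain ⟨j, hj⟩ := h2
  have hmem : (col M j, col M k) ∈ badPairs δ F :=
    mem_badPairs.mpr ⟨M, hM, j, k, hj, hk, rfl⟩
  rw [h] at hmem
  exact absurd hmem (Finset.notMem_empty _)

end Fan

section Fan2
variable {p : ℕ}

lemma natAbs_add_lt_pos {a b : ℤ} (ha : 0 < a) (hb : b < 0) (hab : 0 < a + b) :
    (a + b).natAbs < a.natAbs := by omega

lemma natAbs_add_lt_neg {a b : ℤ} (ha : 0 < a) (hb : b < 0) (hab : a + b < 0) :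
    (a + b).natAbs < b.natAbs := by omega

lemma fan_step (δ : Fin p → ℤ) (Q : Mat p → Prop)
    (hQdet : ∀ M, Q M → M.det = 1)
    (hQchild : ∀ (M : Mat p) (R : Finset (Fin p → ℤ)) (j : Fin p), Q M → R ⊆ SA.raysOf M →
      col M j ∈ R → Q (M.updateCol j (fun i => ∑ v ∈ R, v i)))
    (F : Finset (Mat p)) (hfan : SA.IsBlowupFan p F) (hQ : ∀ M ∈ F, Q M)
    {x₀ : (Fin p → ℤ) × (Fin p → ℤ)} (hx₀ : x₀ ∈ badPairs δ F)
    (hmax : ∀ y ∈ badPairs δ F, ΨP δ y ≤ ΨP δ x₀) :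
    ∃ F', SA.IsBlowupFan p F' ∧ (∀ M ∈ F', Q M) ∧
      ∀ y ∈ badPairs δ F', ΨP δ y < ΨP δ x₀ ∨ (y ∈ badPairs δ F ∧ y ≠ x₀) := by
  classical
  obtain ⟨M₀, hM₀F, j₀, k₀, hj₀, hk₀, hx₀eq⟩ := mem_badPairs.mp hx₀
  set v := col M₀ j₀ with hv
  set w := col M₀ k₀ with hw
  have hvw : v ≠ w := by
    intro h
    rw [h] at hj₀
    exact absurd hk₀ (not_lt.mpr (le_of_lt hj₀))
  have hjk : j₀ ≠ k₀ := by
    intro h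
    exact hvw (by rw [hv, hw, h])
  set R : Finset (Fin p → ℤ) := SA.colSet M₀ {j₀, k₀} with hRdef
  have hRvw : R = {v, w} := by
    rw [hRdef, SA.colSet, Finset.image_insert, Finset.image_singleton]
    rfl
  have hpdsum : pd δ (fun i => ∑ u ∈ R, u i) = pd δ v + pd δ w := by
    rw [pd_sum, hRvw, Finset.sum_insert (by simp [hvw]), Finset.sum_singleton]
  have hcard : 2 ≤ ({j₀, k₀} : Finset (Fin p)).card := by
    rw [Finset.card_insert_of_notMem (by simp [hjk]), Finset.card_singleton]
  -- distinct columns of a Q-matrix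
  have hcols : ∀ M : Mat p, Q M → ∀ j j' : Fin p, j ≠ j' → col M j ≠ col M j' := by
    intro M hQM j j' hne heq
    have hz : M.det = 0 := Matrix.det_zero_of_column_eq hne (fun i => congrFun heq i)
    rw [hQdet M hQM] at hz
    exact one_ne_zero hz
  refine ⟨SA.starSubdiv F R, SA.IsBlowupTower.step _ _ hfan M₀ hM₀F _ hcard, ?_, ?_⟩
  · intro M' hM'
    rcases mem_starSubdiv.mp hM' with ⟨hM'F, -⟩ | ⟨M, hMF, hRM, j, hjR, rfl⟩
    · exact hQ M' hM'F
    · exact hQchild M R j (hQ M hMF) hRM hjR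
  · intro y hy
    obtain ⟨M', hM'F', j, k, hjpos, hkneg, hyeq⟩ := mem_badPairs.mp hy
    rcases mem_starSubdiv.mp hM'F' with ⟨hM'F, hnR⟩ | ⟨M, hMF, hRM, j₁, hj₁R, rfl⟩
    · -- kept cone
      right
      constructor
      · exact mem_badPairs.mpr ⟨M', hM'F, j, k, hjpos, hkneg, hyeq⟩
      · intro hyx
        have hpair : (v, w) = (col M' j, col M' k) := by rw [← hx₀eq, ← hyx, hyeq]
        have h1 : v = col M' j := congrArg Prod.fst hpair
        have h2 : w = col M' k := congrArg Prod.snd hpair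
        apply hnR
        rw [hRvw]
        intro u hu
        rcases Finset.mem_insert.mp hu with rfl | hu
        · exact mem_raysOf.mpr ⟨j, h1.symm⟩
        · rw [Finset.mem_singleton] at hu
          subst hu
          exact mem_raysOf.mpr ⟨k, h2.symm⟩
    · -- child cone
      have hQM := hQ M hMF
      have hvM : v ∈ SA.raysOf M := hRM (by rw [hRvw]; exact Finset.mem_insert_self _ _)
      have hwM : w ∈ SA.raysOf M := hRM (by rw [hRvw]; simp)
      obtain ⟨jv, hjv⟩ := mem_raysOf.mp hvM
      obtain ⟨jw, hjw⟩ := mem_raysOf.mp hwM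
      have hΨx : ΨP δ x₀ = (pd δ v).natAbs + (pd δ w).natAbs := by rw [hx₀eq]; rfl
      by_cases hjj : j = j₁
      · -- first component is the new ray
        have hcolj : col (M.updateCol j₁ (fun i => ∑ u ∈ R, u i)) j
            = fun i => ∑ u ∈ R, u i := by
          rw [col_updateCol, if_pos hjj]
        have hkj : k ≠ j₁ := by
          intro h
          rw [col_updateCol, if_pos hjj] at hjpos
          rw [col_updateCol, if_pos h] at hkneg
          exact absurd hjpos (not_lt.mpr (le_of_lt hkneg))
        have hcolk : col (M.updateCol j₁ (fun i => ∑ u ∈ R, u i)) k = col M k := by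
          rw [col_updateCol, if_neg hkj]
        rw [hcolj, hpdsum] at hjpos
        rw [hcolk] at hkneg
        left
        have hy' : (v, col M k) ∈ badPairs δ F :=
          mem_badPairs.mpr ⟨M, hMF, jv, k, by rw [hjv]; exact hj₀, hkneg, by rw [hjv]⟩
        have hle := hmax _ hy'
        have e0 : ΨP δ (v, col M k) = (pd δ v).natAbs + (pd δ (col M k)).natAbs := rfl
        have e2 : ΨP δ y = (pd δ v + pd δ w).natAbs + (pd δ (col M k)).natAbs := by
          rw [hyeq]
          show (pd δ _).natAbs + (pd δ _).natAbs = _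
          rw [hcolj, hcolk, hpdsum]
        have hlt := natAbs_add_lt_pos hj₀ hk₀ hjpos
        rw [e0, hΨx] at hle
        rw [e2, hΨx]
        exact lt_of_lt_of_le (Nat.add_lt_add_right hlt _) hle
      · by_cases hkj : k = j₁
        · -- second component is the new ray
          have hcolk : col (M.updateCol j₁ (fun i => ∑ u ∈ R, u i)) k
              = fun i => ∑ u ∈ R, u i := by
            rw [col_updateCol, if_pos hkj]
          have hcolj : col (M.updateCol j₁ (fun i => ∑ u ∈ R, u i)) j = col M j := by
            rw [col_updateCol, if_neg hjj]
          rw [hcolk, hpdsum] at hkneg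
          rw [hcolj] at hjpos
          left
          have hy' : (col M j, w) ∈ badPairs δ F :=
            mem_badPairs.mpr ⟨M, hMF, j, jw, hjpos, by rw [hjw]; exact hk₀, by rw [hjw]⟩
          have hle := hmax _ hy'
          have e0 : ΨP δ (col M j, w) = (pd δ (col M j)).natAbs + (pd δ w).natAbs := rfl
          have e2 : ΨP δ y = (pd δ (col M j)).natAbs + (pd δ v + pd δ w).natAbs := by
            rw [hyeq]
            show (pd δ _).natAbs + (pd δ _).natAbs = _
            rw [hcolj, hcolk, hpdsum]
          have hlt := natAbs_add_lt_neg hj₀ hk₀ hkneg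
          rw [e0, hΨx] at hle
          rw [e2, hΨx]
          exact lt_of_lt_of_le (Nat.add_lt_add_left hlt _) hle
        · -- both columns are old columns of M
          have hcolj : col (M.updateCol j₁ (fun i => ∑ u ∈ R, u i)) j = col M j := by
            rw [col_updateCol, if_neg hjj]
          have hcolk : col (M.updateCol j₁ (fun i => ∑ u ∈ R, u i)) k = col M k := by
            rw [col_updateCol, if_neg hkj]
          rw [hcolj] at hjpos
          rw [hcolk] at hkneg
          right
          constructor
          · exact mem_badPairs.mpr ⟨M, hMF, j, k, hjpos, hkneg, by rw [hyeq, hcolj, hcolk]⟩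
          · intro hyx
            have hpair : (v, w) = (col M j, col M k) := by
              rw [← hx₀eq, ← hyx, hyeq, hcolj, hcolk]
            have h1 : v = col M j := congrArg Prod.fst hpair
            have h2 : w = col M k := congrArg Prod.snd hpair
            have hj₁Rvw : col M j₁ ∈ ({v, w} : Finset (Fin p → ℤ)) := by
              rw [← hRvw]; exact hj₁R
            rcases Finset.mem_insert.mp hj₁Rvw with hcase | hcase
            · have hne : j₁ ≠ j := fun h => hjj h.symm
              exact hcols M hQM j₁ j hne (by rw [hcase, h1])
            · rw [Finset.mem_singleton] at hcase
              have hne : j₁ ≠ k := fun h => hkj h.symm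
              exact hcols M hQM j₁ k hne (by rw [hcase, h2])
end Fan2

section Fan3
variable {p : ℕ}

lemma fan_resolve_one (δ : Fin p → ℤ) (Q : Mat p → Prop)
    (hQdet : ∀ M, Q M → M.det = 1)
    (hQchild : ∀ (M : Mat p) (R : Finset (Fin p → ℤ)) (j : Fin p), Q M → R ⊆ SA.raysOf M →
      col M j ∈ R → Q (M.updateCol j (fun i => ∑ v ∈ R, v i))) :
    ∀ (b c : ℕ) (F : Finset (Mat p)), SA.IsBlowupFan p F → (∀ M ∈ F, Q M) →
    (badPairs δ F).sup (ΨP δ) ≤ b →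
    ((badPairs δ F).filter (fun y => ΨP δ y = b)).card ≤ c →
    ∃ F', SA.IsBlowupFan p F' ∧ (∀ M ∈ F', Q M) ∧ badPairs δ F' = ∅ := by
  intro b
  induction b using Nat.strong_induction_on with
  | _ b ihb =>
    intro c
    induction c with
    | zero =>
      intro F hfan hQ hsup hcnt
      by_cases hemp : badPairs δ F = ∅
      · exact ⟨F, hfan, hQ, hemp⟩
      · obtain ⟨x₀, hx₀mem, hx₀sup⟩ :=
          Finset.exists_mem_eq_sup (badPairs δ F) (Finset.nonempty_iff_ne_empty.mpr hemp) (ΨP δ)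
        have hmax : ∀ y ∈ badPairs δ F, ΨP δ y ≤ ΨP δ x₀ := by
          intro y hy
          rw [← hx₀sup]
          exact Finset.le_sup hy
        have hBb : ΨP δ x₀ < b := by
          rcases lt_or_eq_of_le (hx₀sup ▸ hsup) with h | h
          · exact h
          · exfalso
            have : x₀ ∈ (badPairs δ F).filter (fun y => ΨP δ y = b) :=
              Finset.mem_filter.mpr ⟨hx₀mem, h⟩
            have := Finset.card_pos.mpr ⟨x₀, this⟩
            omega
        exact ihb (ΨP δ x₀) hBb ((badPairs δ F).filter (fun y => ΨP δ y = ΨP δ x₀)).card F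
          hfan hQ (by rw [hx₀sup]) le_rfl
    | succ c ihc =>
      intro F hfan hQ hsup hcnt
      by_cases hemp : badPairs δ F = ∅
      · exact ⟨F, hfan, hQ, hemp⟩
      · obtain ⟨x₀, hx₀mem, hx₀sup⟩ :=
          Finset.exists_mem_eq_sup (badPairs δ F) (Finset.nonempty_iff_ne_empty.mpr hemp) (ΨP δ)
        have hmax : ∀ y ∈ badPairs δ F, ΨP δ y ≤ ΨP δ x₀ := by
          intro y hy
          rw [← hx₀sup]
          exact Finset.le_sup hy
        rcases lt_or_eq_of_le (hx₀sup ▸ hsup) with hBb | hBb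
        · exact ihb (ΨP δ x₀) hBb ((badPairs δ F).filter (fun y => ΨP δ y = ΨP δ x₀)).card F
            hfan hQ (by rw [hx₀sup]) le_rfl
        · -- ΨP δ x₀ = b : do one subdivision step
          obtain ⟨F', hfan', hQ', hprog⟩ :=
            fan_step δ Q hQdet hQchild F hfan hQ hx₀mem hmax
          apply ihc F' hfan' hQ'
          · apply Finset.sup_le
            intro y hy
            rcases hprog y hy with h | h
            · omega
            · rw [← hBb]
              exact hmax y h.1
          · have hsubset : (badPairs δ F').filter (fun y => ΨP δ y = b) ⊆
                ((badPairs δ F).filter (fun y => ΨP δ y = b)).erase x₀ := by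
              intro y hy
              obtain ⟨hy1, hy2⟩ := Finset.mem_filter.mp hy
              rcases hprog y hy1 with h | h
              · omega
              · exact Finset.mem_erase.mpr ⟨h.2, Finset.mem_filter.mpr ⟨h.1, hy2⟩⟩
            have hx₀filter : x₀ ∈ (badPairs δ F).filter (fun y => ΨP δ y = b) :=
              Finset.mem_filter.mpr ⟨hx₀mem, hBb⟩
            have h1 := Finset.card_le_card hsubset
            have h2 := Finset.card_erase_of_mem hx₀filter
            omega

lemma fan_resolve (p : ℕ) (D : List (Fin p → ℤ)) :
    ∃ F : Finset (Mat p), SA.IsBlowupFan p F ∧ (∀ M ∈ F, Nice M) ∧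
      ∀ M ∈ F, ∀ δ ∈ D, signOK δ M := by
  induction D with
  | nil =>
    refine ⟨{1}, SA.IsBlowupTower.refl _, ?_, by simp⟩
    intro M hM
    rw [Finset.mem_singleton] at hM
    subst hM
    constructor
    · intro i j
      by_cases h : i = j <;> simp [Matrix.one_apply, h]
    · exact Matrix.det_one
  | cons δ D ih =>
    obtain ⟨F₀, hfan₀, hnice₀, hsign₀⟩ := ih
    set Q : Mat p → Prop := fun M => Nice M ∧ ∀ δ' ∈ D, signOK δ' M with hQdef
    have hQdet : ∀ M, Q M → M.det = 1 := fun M h => h.1.2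
    have hQchild : ∀ (M : Mat p) (R : Finset (Fin p → ℤ)) (j : Fin p), Q M → R ⊆ SA.raysOf M →
        col M j ∈ R → Q (M.updateCol j (fun i => ∑ v ∈ R, v i)) := by
      intro M R j hQM hR hj
      exact ⟨Nice_child hQM.1 hR hj, fun δ' hδ' => signOK_child (hQM.2 δ' hδ') hR⟩
    obtain ⟨F, hfan, hQF, hEmpty⟩ :=
      fan_resolve_one δ Q hQdet hQchild ((badPairs δ F₀).sup (ΨP δ))
        ((badPairs δ F₀).filter (fun y => ΨP δ y = (badPairs δ F₀).sup (ΨP δ))).card F₀ hfan₀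
        (fun M hM => ⟨hnice₀ M hM, fun δ' h => hsign₀ M hM δ' h⟩) le_rfl le_rfl
    refine ⟨F, hfan, fun M hM => (hQF M hM).1, ?_⟩
    intro M hM δ' hδ'
    rcases List.mem_cons.mp hδ' with h | h
    · subst h
      exact badPairs_empty_signOK hEmpty M hM
    · exact (hQF M hM).2 δ' h

end Fan3

section Chart
open MvPolynomial
variable {p q : ℕ}

/-- the `z_j`-order of the chart pull-back of a monomial. -/
def Texp (M : Mat p) {q : ℕ} (d : Vars p q →₀ ℕ) (j : Fin p) : ℕ :=
  ∑ i, (M i j).toNat * d (Sum.inl i)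

def fullExp (M : Mat p) (q : ℕ) (d : Vars p q →₀ ℕ) : Vars p q →₀ ℕ :=
  Finsupp.equivFunOnFinite.symm (Sum.elim (fun j => Texp M d j) (fun k => d (Sum.inr k)))

def embExp (M : Mat p) (q : ℕ) (m : Fin p → ℕ) (d : Vars p q →₀ ℕ) : Vars p q →₀ ℕ :=
  Finsupp.equivFunOnFinite.symm (Sum.elim (fun j => Texp M d j - m j) (fun k => d (Sum.inr k)))

def mExp (p q : ℕ) (m : Fin p → ℕ) : Vars p q →₀ ℕ :=
  Finsupp.equivFunOnFinite.symm (Sum.elim m 0)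

lemma chartHom_monomial (M : Mat p) (d : Vars p q →₀ ℕ) (c : ℝ) :
    SA.chartHom ℝ p q M (monomial d c) = monomial (fullExp M q d) c := by
  rw [SA.chartHom, aeval_monomial, monomial_eq, MvPolynomial.algebraMap_eq]
  congr 1
  rw [Finsupp.prod_fintype _ _ (fun s => pow_zero _),
    Finsupp.prod_fintype _ _ (fun s => pow_zero _),
    Fintype.prod_sum_type, Fintype.prod_sum_type]
  have hfull_inl : ∀ j, fullExp M q d (Sum.inl j) = Texp M d j := fun j => by
    simp [fullExp]
  have hfull_inr : ∀ k, fullExp M q d (Sum.inr k) = d (Sum.inr k) := fun k => by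
    simp [fullExp]
  congr 1
  · calc (∏ i, (Sum.elim (fun i => ∏ j, (X (Sum.inl j) : Poly p q) ^ (M i j).toNat)
            (fun k => (X (Sum.inr k) : Poly p q)) (Sum.inl i)) ^ d (Sum.inl i))
        = ∏ i, ∏ j, (X (Sum.inl j) : Poly p q) ^ ((M i j).toNat * d (Sum.inl i)) := by
          apply Finset.prod_congr rfl
          intro i _
          rw [Sum.elim_inl, ← Finset.prod_pow]
          exact Finset.prod_congr rfl fun j _ => (pow_mul _ _ _).symm
      _ = ∏ j, ∏ i, (X (Sum.inl j) : Poly p q) ^ ((M i j).toNat * d (Sum.inl i)) :=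
          Finset.prod_comm
      _ = ∏ j, (X (Sum.inl j) : Poly p q) ^ (Texp M d j) := by
          apply Finset.prod_congr rfl
          intro j _
          rw [Finset.prod_pow_eq_pow_sum]
          rfl
      _ = ∏ j, (X (Sum.inl j) : Poly p q) ^ fullExp M q d (Sum.inl j) := by
          simp only [hfull_inl]

def hPoly (M : Mat p) (q : ℕ) (m : Fin p → ℕ) (g : Poly p q) : Poly p q :=
  ∑ d ∈ g.support, monomial (embExp M q m d) (coeff d g)

lemma key_factor (M : Mat p) (m : Fin p → ℕ) (g : Poly p q)
    (hm : ∀ d ∈ g.support, ∀ j, m j ≤ Texp M d j) :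
    monomial (mExp p q m) 1 * hPoly M q m g = SA.chartHom ℝ p q M g := by
  conv_rhs => rw [g.as_sum]
  rw [map_sum, hPoly, Finset.mul_sum]
  apply Finset.sum_congr rfl
  intro d hd
  rw [chartHom_monomial, monomial_mul, one_mul]
  have hexp : mExp p q m + embExp M q m d = fullExp M q d := by
    ext s
    rw [Finsupp.add_apply]
    cases s with
    | inl j =>
      have h1 : mExp p q m (Sum.inl j) = m j := by simp [mExp]
      have h2 : embExp M q m d (Sum.inl j) = Texp M d j - m j := by simp [embExp]
      have h3 : fullExp M q d (Sum.inl j) = Texp M d j := by simp [fullExp]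
      rw [h1, h2, h3]
      exact Nat.add_sub_cancel' (hm d hd j)
    | inr k =>
      have h1 : mExp p q m (Sum.inr k) = 0 := by simp [mExp]
      have h2 : embExp M q m d (Sum.inr k) = d (Sum.inr k) := by simp [embExp]
      have h3 : fullExp M q d (Sum.inr k) = d (Sum.inr k) := by simp [fullExp]
      rw [h1, h2, h3, zero_add]
  rw [hexp]

lemma eval_chartHom (M : Mat p) (z : Vars p q → ℝ) (g : Poly p q) :
    eval z (SA.chartHom ℝ p q M g)
      = eval (fun s => Sum.elim (fun i => ∏ j, z (Sum.inl j) ^ (M i j).toNat)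
          (fun k => z (Sum.inr k)) s) g := by
  rw [SA.chartHom, eval_aeval]
  have hfn : (fun s => eval z ((Sum.elim (fun i => ∏ j, (X (Sum.inl j) : Poly p q) ^ (M i j).toNat)
      (fun j => X (Sum.inr j))) s))
      = fun s => Sum.elim (fun i => ∏ j, z (Sum.inl j) ^ (M i j).toNat)
          (fun k => z (Sum.inr k)) s := by
    funext s
    cases s with
    | inl i => simp
    | inr k => simp
  rw [hfn]

def inlF (p q : ℕ) : Finset (Vars p q) := Finset.univ.image Sum.inl

lemma exists_min_Texp (M : Mat p) (s : Finset (Vars p q →₀ ℕ)) (hne : s.Nonempty)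
    (hcomp : ∀ d ∈ s, ∀ d' ∈ s,
      (∀ j, Texp M d j ≤ Texp M d' j) ∨ (∀ j, Texp M d' j ≤ Texp M d j)) :
    ∃ d₀ ∈ s, ∀ d ∈ s, ∀ j, Texp M d₀ j ≤ Texp M d j := by
  classical
  revert hne hcomp
  induction s using Finset.induction_on with
  | empty => intro hne _; exact absurd hne (by simp)
  | @insert a t ha ih =>
    intro _ hcomp
    by_cases ht : t.Nonempty
    · obtain ⟨d₀, hd₀t, hd₀min⟩ := ih ht (fun d hd d' hd' =>
        hcomp d (Finset.mem_insert_of_mem hd) d' (Finset.mem_insert_of_mem hd'))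
      rcases hcomp a (Finset.mem_insert_self a t) d₀ (Finset.mem_insert_of_mem hd₀t) with h | h
      · refine ⟨a, Finset.mem_insert_self a t, ?_⟩
        intro d hd j
        rcases Finset.mem_insert.mp hd with rfl | hd
        · exact le_rfl
        · exact le_trans (h j) (hd₀min d hd j)
      · refine ⟨d₀, Finset.mem_insert_of_mem hd₀t, ?_⟩
        intro d hd j
        rcases Finset.mem_insert.mp hd with rfl | hd
        · exact h j
        · exact hd₀min d hd j
    · rw [Finset.not_nonempty_iff_eq_empty] at ht
      subst ht
      refine ⟨a, Finset.mem_insert_self a _, ?_⟩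
      intro d hd j
      rcases Finset.mem_insert.mp hd with rfl | hd
      · exact le_rfl
      · exact absurd hd (Finset.notMem_empty d)

lemma Texp_inj (M : Mat p) (hdet : M.det = 1) (hnn : ∀ i j, 0 ≤ M i j)
    {d d' : Vars p q →₀ ℕ} (hT : ∀ j, Texp M d j = Texp M (q := q) d' j)
    (hr : ∀ k, d (Sum.inr k) = d' (Sum.inr k)) : d = d' := by
  have hcast : ∀ (e : Vars p q →₀ ℕ) (j : Fin p),
      ((Texp M e j : ℤ)) = ∑ i, (e (Sum.inl i) : ℤ) * M i j := by
    intro e j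
    rw [Texp]
    push_cast
    apply Finset.sum_congr rfl
    intro i _
    rw [Int.toNat_of_nonneg (hnn i j)]
    ring
  set δv : Fin p → ℤ := fun i => (d (Sum.inl i) : ℤ) - (d' (Sum.inl i) : ℤ) with hδv
  have hvm : Matrix.vecMul δv M = 0 := by
    funext j
    have h1 : (∑ i, (d (Sum.inl i) : ℤ) * M i j) = ∑ i, (d' (Sum.inl i) : ℤ) * M i j := by
      rw [← hcast d j, ← hcast d' j, hT j]
    show ∑ i, δv i * M i j = 0
    simp only [hδv, sub_mul]
    rw [Finset.sum_sub_distrib, h1, sub_self]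
  haveI := M.invertibleOfIsUnitDet (by rw [hdet]; exact isUnit_one)
  have hδ0 : δv = 0 := by
    have h2 : Matrix.vecMul (Matrix.vecMul δv M) (⅟M) = Matrix.vecMul (0 : Fin p → ℤ) (⅟M) := by
      rw [hvm]
    rw [Matrix.vecMul_vecMul, mul_invOf_self, Matrix.vecMul_one, Matrix.zero_vecMul] at h2
    exact h2
  have hinl : ∀ i, d (Sum.inl i) = d' (Sum.inl i) := by
    intro i
    have := congrFun hδ0 i
    simp only [hδv, Pi.zero_apply, sub_eq_zero] at this
    exact_mod_cast this
  ext s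
  cases s with
  | inl i => exact hinl i
  | inr k => exact hr k

lemma ψ_hPoly_ne_zero (M : Mat p) (hdet : M.det = 1) (hnn : ∀ i j, 0 ≤ M i j)
    (g : Poly p q) {d₀ : Vars p q →₀ ℕ}
    (hd₀ : d₀ ∈ g.support) (hmin : ∀ d ∈ g.support, ∀ j, Texp M d₀ j ≤ Texp M d j) :
    ψ p q (inlF p q) (hPoly M q (Texp M d₀) g) ≠ 0 := by
  classical
  set m : Fin p → ℕ := Texp M d₀ with hm
  set e₀ := embExp M q m d₀ with he₀
  have hcoeff : coeff e₀ (ψ p q (inlF p q) (hPoly M q m g)) = coeff d₀ g := by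
    rw [hPoly, map_sum, coeff_sum]
    rw [Finset.sum_eq_single d₀]
    · rw [ψ_monomial_keep]
      · rw [coeff_monomial, if_pos rfl]
      · intro s hs
        obtain ⟨i, -, rfl⟩ := Finset.mem_image.mp hs
        simp [embExp, hm]
    · intro d hd hne
      by_cases hfree : ∀ j, embExp M q m d (Sum.inl j) = 0
      · rw [ψ_monomial_keep]
        · rw [coeff_monomial, if_neg]
          intro heq
          apply hne
          apply Texp_inj M hdet hnn
          · intro j
            have h1 := hfree j
            have h2 : Texp M d j - m j = 0 := by simpa [embExp] using h1
            have h3 := hmin d hd j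
            have h4 : Texp M d j = m j := by omega
            rw [h4, hm]
          · intro k
            have := congrFun (congrArg (fun (e : Vars p q →₀ ℕ) => (e : Vars p q → ℕ)) heq) (Sum.inr k)
            simpa [embExp, he₀] using this
        · intro s hs
          obtain ⟨i, -, rfl⟩ := Finset.mem_image.mp hs
          exact hfree i
      · push_neg at hfree
        obtain ⟨j, hj⟩ := hfree
        rw [ψ_monomial_kill]
        · rw [MvPolynomial.coeff_zero]
        · exact ⟨Sum.inl j, Finset.mem_image.mpr ⟨j, Finset.mem_univ j, rfl⟩, hj⟩
    · intro h
      exact absurd hd₀ h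
  intro h0
  rw [h0, MvPolynomial.coeff_zero] at hcoeff
  exact (MvPolynomial.mem_support_iff.mp hd₀) hcoeff.symm

end Chart

section Chart2
open MvPolynomial
variable {p q : ℕ}

lemma chart_good (p q : ℕ) (A : Set (Euc (Fin p ⊕ Fin q)))
    (g' : Finset (Fin p) → Poly p q)
    (hvan : ∀ K : Finset (Fin p), K.Nonempty → ∀ z : Euc (Fin p ⊕ Fin q), z ∈ A →
      (∀ i ∈ K, z (Sum.inl i) = 0) → eval (fun s => z s) (g' K) = 0)
    (hfree : ∀ K : Finset (Fin p), K.Nonempty →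
      ∃ d ∈ (g' K).support, ∀ i ∈ K, d (Sum.inl i) = 0)
    (M : Mat p) (hnice : Nice M)
    (hcomp : ∀ K : Finset (Fin p), K.Nonempty → ∀ d ∈ (g' K).support, ∀ d' ∈ (g' K).support,
      (∀ j, Texp M d j ≤ Texp M d' j) ∨ (∀ j, Texp M d' j ≤ Texp M d j)) :
    SA.AlmostStrictlyAllowable (SA.monMap p q M ⁻¹' A) := by
  classical
  intro I hI I' hsub
  -- the union of the supports of the columns in `L`
  set KK : Finset (Fin p) → Finset (Fin p) :=
    fun L => Finset.univ.filter (fun i => ∃ j ∈ L, M i j ≠ 0) with hKK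
  have hKKne : ∀ L : Finset (Fin p), L.Nonempty → (KK L).Nonempty := by
    intro L hL
    obtain ⟨j₀, hj₀⟩ := hL
    by_contra hemp
    rw [Finset.not_nonempty_iff_eq_empty] at hemp
    have hz : ∀ i, M i j₀ = 0 := by
      intro i
      by_contra hne
      have hmem : i ∈ KK L := Finset.mem_filter.mpr ⟨Finset.mem_univ i, ⟨j₀, hj₀, hne⟩⟩
      rw [hemp] at hmem
      exact absurd hmem (Finset.notMem_empty i)
    have hdz : M.det = 0 := Matrix.det_eq_zero_of_column_eq_zero j₀ hz
    rw [hnice.2] at hdz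
    exact one_ne_zero hdz
  -- the minimizing exponent of `g' (KK L)`
  have hminex : ∀ L : Finset (Fin p), L.Nonempty → ∃ d₀ ∈ (g' (KK L)).support,
      ∀ d ∈ (g' (KK L)).support, ∀ j, Texp M d₀ j ≤ Texp M d j := by
    intro L hL
    obtain ⟨dh, hdh, -⟩ := hfree (KK L) (hKKne L hL)
    exact exists_min_Texp M _ ⟨dh, hdh⟩ (hcomp (KK L) (hKKne L hL))
  choose dmin hdminmem hdminmin using hminex
  -- for `j ∈ L` the minimum is `0`
  have hmzero : ∀ (L : Finset (Fin p)) (hL : L.Nonempty), ∀ j ∈ L,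
      Texp M (dmin L hL) j = 0 := by
    intro L hL j hj
    obtain ⟨dh, hdhmem, hdhfree⟩ := hfree (KK L) (hKKne L hL)
    have h1 : Texp M dh j = 0 := by
      rw [Texp]
      apply Finset.sum_eq_zero
      intro i _
      by_cases hdi : dh (Sum.inl i) = 0
      · rw [hdi, mul_zero]
      · have hiK : i ∉ KK L := fun hiK => hdi (hdhfree i hiK)
        have hMij : M i j = 0 := by
          by_contra hne
          exact hiK (Finset.mem_filter.mpr ⟨Finset.mem_univ i, ⟨j, hj, hne⟩⟩)
        rw [hMij]
        simp
    have h2 := hdminmin L hL dh hdhmem j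
    omega
  -- the witness polynomial
  set 𝒮 : Finset (Finset (Fin p)) :=
    Finset.univ.filter (fun L => I ⊆ L ∧ L.Nonempty) with h𝒮
  have hne𝒮 : ∀ L ∈ 𝒮, L.Nonempty := fun L hL => (Finset.mem_filter.mp hL).2.2
  set f : Poly p q := ∏ L ∈ 𝒮.attach,
    hPoly M q (Texp M (dmin L.1 (hne𝒮 L.1 L.2))) (g' (KK L.1)) with hf
  -- `f` vanishes on the preimage intersected with the face of `I`
  have hfvan : ∀ z ∈ (SA.monMap p q M ⁻¹' A) ∩ SA.face (Fin q) I,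
      eval (fun s => z s) f = 0 := by
    intro z hz
    set Lz : Finset (Fin p) := Finset.univ.filter (fun j => z (Sum.inl j) = 0) with hLzdef
    have hILz : I ⊆ Lz := fun i hi =>
      Finset.mem_filter.mpr ⟨Finset.mem_univ i, hz.2 i hi⟩
    have hLzne : Lz.Nonempty := by
      obtain ⟨i, hi⟩ := hI
      exact ⟨i, hILz hi⟩
    have hLz𝒮 : Lz ∈ 𝒮 := Finset.mem_filter.mpr ⟨Finset.mem_univ _, hILz, hLzne⟩
    rw [hf, map_prod]
    apply Finset.prod_eq_zero (Finset.mem_attach 𝒮 ⟨Lz, hLz𝒮⟩)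
    -- the factor corresponding to `Lz` vanishes at `z`
    set m : Fin p → ℕ := Texp M (dmin Lz (hne𝒮 Lz hLz𝒮)) with hmdef
    have hchart0 : eval (fun s => z s) (SA.chartHom ℝ p q M (g' (KK Lz))) = 0 := by
      rw [eval_chartHom]
      have hface : ∀ i ∈ KK Lz, (SA.monMap p q M z) (Sum.inl i) = 0 := by
        intro i hiK
        obtain ⟨-, j, hjL, hMij⟩ := Finset.mem_filter.mp hiK
        show (Sum.elim (fun i' => ∏ j', z (Sum.inl j') ^ (M i' j').toNat)
          (fun k => z (Sum.inr k))) (Sum.inl i) = 0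
        rw [Sum.elim_inl]
        apply Finset.prod_eq_zero (Finset.mem_univ j)
        have hzj : z (Sum.inl j) = 0 := (Finset.mem_filter.mp hjL).2
        rw [hzj]
        apply zero_pow
        have hpos := hnice.1 i j
        omega
      have := hvan (KK Lz) (hKKne Lz hLzne) (SA.monMap p q M z) hz.1 hface
      exact this
    have hkey := key_factor M m (g' (KK Lz)) (fun d hd j => hdminmin Lz (hne𝒮 Lz hLz𝒮) d hd j)
    have hev := congrArg (eval (fun s => z s)) hkey
    rw [map_mul, hchart0] at hev
    have hmono_ne : eval (fun s => z s) (monomial (mExp p q m) 1) ≠ 0 := by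
      rw [eval_monomial, Finsupp.prod_fintype _ _ (fun s => pow_zero _), one_mul,
        Fintype.prod_sum_type]
      apply mul_ne_zero
      · apply Finset.prod_ne_zero_iff.mpr
        intro j _
        have hmj : mExp p q m (Sum.inl j) = m j := by simp [mExp]
        rw [hmj]
        by_cases hjLz : j ∈ Lz
        · rw [hmdef, hmzero Lz (hne𝒮 Lz hLz𝒮) j hjLz, pow_zero]
          exact one_ne_zero
        · have hzj : z (Sum.inl j) ≠ 0 := by
            intro h0
            exact hjLz (Finset.mem_filter.mpr ⟨Finset.mem_univ j, h0⟩)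
          exact pow_ne_zero _ hzj
      · apply Finset.prod_ne_zero_iff.mpr
        intro k _
        have hmk : mExp p q m (Sum.inr k) = 0 := by simp [mExp]
        rw [hmk, pow_zero]
        exact one_ne_zero
    rcases mul_eq_zero.mp hev with h | h
    · exact absurd h hmono_ne
    · exact h
  -- the kill of all `z`-variables of `f` is nonzero
  have hfψ : ψ p q (inlF p q) f ≠ 0 := by
    rw [hf, map_prod]
    apply Finset.prod_ne_zero_iff.mpr
    intro L _
    exact ψ_hPoly_ne_zero M hnice.2 hnice.1 (g' (KK L.1))
      (hdminmem L.1 (hne𝒮 L.1 L.2)) (hdminmin L.1 (hne𝒮 L.1 L.2))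
  obtain ⟨x₀, hx₀⟩ := exists_eval_ne_zero hfψ
  set ζ : Euc (Fin p ⊕ Fin q) :=
    WithLp.toLp 2 (fun s => Sum.elim (fun _ => (0 : ℝ)) (fun k => x₀ (Sum.inr k)) s) with hζdef
  have hζface : ζ ∈ SA.face (Fin q) I' := by
    intro i _
    rfl
  have hζmem := hsub hζface
  have hζ0 : eval (fun s => ζ s) f = 0 := hζmem f hfvan
  have hψeval : eval x₀ (ψ p q (inlF p q) f) = eval (fun s => ζ s) f := by
    rw [ψ, eval_aeval]
    have hfn : (fun s => eval x₀ (if s ∈ inlF p q then 0 else X s)) = fun s => ζ s := by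
      funext s
      cases s with
      | inl i =>
        have hsmem : Sum.inl i ∈ inlF p q :=
          Finset.mem_image.mpr ⟨i, Finset.mem_univ i, rfl⟩
        rw [if_pos hsmem]
        simp [hζdef]
      | inr k =>
        have hsmem : Sum.inr (α := Fin p) k ∉ inlF p q := by
          intro hmem
          obtain ⟨i, -, hi⟩ := Finset.mem_image.mp hmem
          exact Sum.inl_ne_inr hi
        rw [if_neg hsmem]
        simp [hζdef]
    rw [hfn]
  rw [hζ0] at hψeval
  exact hx₀ hψeval

end Chart2

end S11

/-- Let `A` be a closed semi-algebraic subset of `ℝ^p × ℝ^q` which is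
allowable. Then there is a succession of permissible blow-ups `μ : R̃^n → ℝ^n` (recorded
by its fan `F` of monomial charts) such that `μ⁻¹(A)` is almost strictly allowable: in
each chart (whose blow-down map is the monomial map with exponent matrix `M`) the
preimage of `A` is strictly allowable with respect to every proper face. -/
theorem statement_11 (p q : ℕ) (A : Set (Euc (Fin p ⊕ Fin q))) (hA : IsClosed A)
    (hsa : SA.IsSemialgebraic A) (hallow : SA.Allowable A) :
    ∃ F : Finset (Matrix (Fin p) (Fin p) ℤ), SA.IsBlowupFan p F ∧
      ∀ M ∈ F, SA.AlmostStrictlyAllowable (SA.monMap p q M ⁻¹' A) := by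
  classical
  have part1 : ∀ K : Finset (Fin p), K.Nonempty → ∃ g : S11.Poly p q,
      (∀ z ∈ A ∩ SA.face (Fin q) K, MvPolynomial.eval (fun s => z s) g = 0) ∧
      ∃ d ∈ g.support, ∀ i ∈ K, d (Sum.inl i) = 0 :=
    fun K hK => S11.exists_poly_witness p q A hallow K hK
  choose g0 hg0 using part1
  set g' : Finset (Fin p) → S11.Poly p q :=
    fun K => if h : K.Nonempty then g0 K h else 0 with hg'
  have hvan : ∀ K : Finset (Fin p), K.Nonempty → ∀ z : Euc (Fin p ⊕ Fin q), z ∈ A →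
      (∀ i ∈ K, z (Sum.inl i) = 0) → MvPolynomial.eval (fun s => z s) (g' K) = 0 := by
    intro K hK z hzA hzface
    rw [hg']
    simp only [dif_pos hK]
    exact (hg0 K hK).1 z ⟨hzA, hzface⟩
  have hfree : ∀ K : Finset (Fin p), K.Nonempty →
      ∃ d ∈ (g' K).support, ∀ i ∈ K, d (Sum.inl i) = 0 := by
    intro K hK
    rw [hg']
    simp only [dif_pos hK]
    exact (hg0 K hK).2
  set D : Finset (Fin p → ℤ) :=
    (Finset.univ.filter (fun K : Finset (Fin p) => K.Nonempty)).biUnion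
      (fun K => ((g' K).support ×ˢ (g' K).support).image
        (fun dd : (S11.Vars p q →₀ ℕ) × (S11.Vars p q →₀ ℕ) =>
          fun i => (dd.1 (Sum.inl i) : ℤ) - (dd.2 (Sum.inl i) : ℤ))) with hD
  obtain ⟨F, hFfan, hFnice, hFsign⟩ := S11.fan_resolve p D.toList
  refine ⟨F, hFfan, ?_⟩
  intro M hM
  apply S11.chart_good p q A g' hvan hfree M (hFnice M hM)
  intro K hK d hd d' hd'
  have hδD : (fun i => (d (Sum.inl i) : ℤ) - (d' (Sum.inl i) : ℤ)) ∈ D := by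
    rw [hD]
    apply Finset.mem_biUnion.mpr
    exact ⟨K, Finset.mem_filter.mpr ⟨Finset.mem_univ K, hK⟩,
      Finset.mem_image.mpr ⟨(d, d'), Finset.mem_product.mpr ⟨hd, hd'⟩, rfl⟩⟩
  have hsign := hFsign M hM _ (Finset.mem_toList.mpr hδD)
  have hnn : ∀ i j, (0 : ℤ) ≤ M i j := (hFnice M hM).1
  have hcast : ∀ (e : S11.Vars p q →₀ ℕ) (j : Fin p),
      ((S11.Texp M e j : ℤ)) = ∑ i, (e (Sum.inl i) : ℤ) * M i j := by
    intro e j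
    rw [S11.Texp]
    push_cast
    apply Finset.sum_congr rfl
    intro i _
    rw [Int.toNat_of_nonneg (hnn i j)]
    ring
  have hpd : ∀ j, S11.pd (fun i => (d (Sum.inl i) : ℤ) - (d' (Sum.inl i) : ℤ)) (S11.col M j)
      = (S11.Texp M d j : ℤ) - (S11.Texp M d' j : ℤ) := by
    intro j
    rw [S11.pd]
    simp only [S11.col, sub_mul]
    rw [Finset.sum_sub_distrib, ← hcast d j, ← hcast d' j]
  rcases hsign with h | h
  · right
    intro j
    have hj := h j
    rw [hpd j] at hj
    have hj2 : (S11.Texp M d' j : ℤ) ≤ (S11.Texp M d j : ℤ) := by omega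
    exact_mod_cast hj2
  · left
    intro j
    have hj := h j
    rw [hpd j] at hj
    have hj2 : (S11.Texp M d j : ℤ) ≤ (S11.Texp M d' j : ℤ) := by omega
    exact_mod_cast hj2
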